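/- The alternating group A5 is isomorphic to PSL(2,5), the projective special linear group of degree 2 over the field with 5 elements. -/

import Mathlib

open Matrix Equiv

instance instDecEqSL (n : Type*) [DecidableEq n] [Fintype n] (R : Type*) [CommRing R]
    [DecidableEq R] : DecidableEq (Matrix.SpecialLinearGroup n R) :=
  fun A B => @decidable_of_iff _ _ (Matrix.SpecialLinearGroup.ext_iff A B).symm
    (@Fintype.decidableForallFintype _ _ (fun _ => Fintype.decidableForallFintype) _)

instance instDecMemAlt (α : Type*) [Fintype α] [DecidableEq α] :
    DecidablePred (· ∈ alternatingGroup α) :=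
  fun x => decidable_of_iff _ (Equiv.Perm.mem_alternatingGroup (f := x)).symm

abbrev SL5 := Matrix.SpecialLinearGroup (Fin 2) (ZMod 5)

def a5t0 : List (SL5 × Equiv.Perm (Fin 5)) := [
  (⟨!![0, 1; 4, 0], by decide⟩, Equiv.swap 0 1 * Equiv.swap 2 4),
  (⟨!![0, 1; 4, 1], by decide⟩, Equiv.swap 0 4 * Equiv.swap 4 3),
  (⟨!![0, 1; 4, 2], by decide⟩, Equiv.swap 0 2 * Equiv.swap 2 3 * Equiv.swap 3 1 * Equiv.swap 1 4),
  (⟨!![0, 1; 4, 3], by decide⟩, Equiv.swap 0 3 * Equiv.swap 3 4 * Equiv.swap 4 1 * Equiv.swap 1 2),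
  (⟨!![0, 1; 4, 4], by decide⟩, Equiv.swap 1 3 * Equiv.swap 3 2),
  (⟨!![0, 2; 2, 0], by decide⟩, Equiv.swap 0 4 * Equiv.swap 1 2),
  (⟨!![0, 2; 2, 1], by decide⟩, Equiv.swap 2 3 * Equiv.swap 3 4),
  (⟨!![0, 2; 2, 2], by decide⟩, Equiv.swap 0 2 * Equiv.swap 2 4 * Equiv.swap 4 1 * Equiv.swap 1 3),
  (⟨!![0, 2; 2, 3], by decide⟩, Equiv.swap 0 1 * Equiv.swap 1 4 * Equiv.swap 4 3 * Equiv.swap 3 2),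
  (⟨!![0, 2; 2, 4], by decide⟩, Equiv.swap 0 3 * Equiv.swap 3 1)]

def a5t1 : List (SL5 × Equiv.Perm (Fin 5)) := [
  (⟨!![0, 3; 3, 0], by decide⟩, Equiv.swap 0 4 * Equiv.swap 1 2),
  (⟨!![0, 3; 3, 1], by decide⟩, Equiv.swap 0 3 * Equiv.swap 3 1),
  (⟨!![0, 3; 3, 2], by decide⟩, Equiv.swap 0 1 * Equiv.swap 1 4 * Equiv.swap 4 3 * Equiv.swap 3 2),
  (⟨!![0, 3; 3, 3], by decide⟩, Equiv.swap 0 2 * Equiv.swap 2 4 * Equiv.swap 4 1 * Equiv.swap 1 3),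
  (⟨!![0, 3; 3, 4], by decide⟩, Equiv.swap 2 3 * Equiv.swap 3 4),
  (⟨!![0, 4; 1, 0], by decide⟩, Equiv.swap 0 1 * Equiv.swap 2 4),
  (⟨!![0, 4; 1, 1], by decide⟩, Equiv.swap 1 3 * Equiv.swap 3 2),
  (⟨!![0, 4; 1, 2], by decide⟩, Equiv.swap 0 3 * Equiv.swap 3 4 * Equiv.swap 4 1 * Equiv.swap 1 2),
  (⟨!![0, 4; 1, 3], by decide⟩, Equiv.swap 0 2 * Equiv.swap 2 3 * Equiv.swap 3 1 * Equiv.swap 1 4),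
  (⟨!![0, 4; 1, 4], by decide⟩, Equiv.swap 0 4 * Equiv.swap 4 3)]

def a5t2 : List (SL5 × Equiv.Perm (Fin 5)) := [
  (⟨!![1, 0; 0, 1], by decide⟩, 1),
  (⟨!![1, 0; 1, 1], by decide⟩, Equiv.swap 0 1 * Equiv.swap 1 4 * Equiv.swap 4 2 * Equiv.swap 2 3),
  (⟨!![1, 0; 2, 1], by decide⟩, Equiv.swap 0 4 * Equiv.swap 4 3 * Equiv.swap 3 1 * Equiv.swap 1 2),
  (⟨!![1, 0; 3, 1], by decide⟩, Equiv.swap 0 2 * Equiv.swap 2 1 * Equiv.swap 1 3 * Equiv.swap 3 4),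
  (⟨!![1, 0; 4, 1], by decide⟩, Equiv.swap 0 3 * Equiv.swap 3 2 * Equiv.swap 2 4 * Equiv.swap 4 1),
  (⟨!![1, 1; 0, 1], by decide⟩, Equiv.swap 0 1 * Equiv.swap 1 3 * Equiv.swap 3 4 * Equiv.swap 4 2),
  (⟨!![1, 1; 1, 2], by decide⟩, Equiv.swap 0 4 * Equiv.swap 4 3 * Equiv.swap 3 2 * Equiv.swap 2 1),
  (⟨!![1, 1; 2, 3], by decide⟩, Equiv.swap 0 2 * Equiv.swap 2 4),
  (⟨!![1, 1; 3, 4], by decide⟩, Equiv.swap 0 3 * Equiv.swap 1 4),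
  (⟨!![1, 1; 4, 0], by decide⟩, Equiv.swap 1 2 * Equiv.swap 2 3)]

def a5t3 : List (SL5 × Equiv.Perm (Fin 5)) := [
  (⟨!![1, 2; 0, 1], by decide⟩, Equiv.swap 0 3 * Equiv.swap 3 2 * Equiv.swap 2 1 * Equiv.swap 1 4),
  (⟨!![1, 2; 1, 3], by decide⟩, Equiv.swap 1 2 * Equiv.swap 2 4),
  (⟨!![1, 2; 2, 0], by decide⟩, Equiv.swap 0 1 * Equiv.swap 1 3),
  (⟨!![1, 2; 3, 2], by decide⟩, Equiv.swap 0 4 * Equiv.swap 4 2 * Equiv.swap 2 3 * Equiv.swap 3 1),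
  (⟨!![1, 2; 4, 4], by decide⟩, Equiv.swap 0 2 * Equiv.swap 3 4),
  (⟨!![1, 3; 0, 1], by decide⟩, Equiv.swap 0 4 * Equiv.swap 4 1 * Equiv.swap 1 2 * Equiv.swap 2 3),
  (⟨!![1, 3; 1, 4], by decide⟩, Equiv.swap 0 2 * Equiv.swap 1 3),
  (⟨!![1, 3; 2, 2], by decide⟩, Equiv.swap 0 3 * Equiv.swap 3 4 * Equiv.swap 4 2 * Equiv.swap 2 1),
  (⟨!![1, 3; 3, 0], by decide⟩, Equiv.swap 2 4 * Equiv.swap 4 3),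
  (⟨!![1, 3; 4, 3], by decide⟩, Equiv.swap 0 1 * Equiv.swap 1 4)]

def a5t4 : List (SL5 × Equiv.Perm (Fin 5)) := [
  (⟨!![1, 4; 0, 1], by decide⟩, Equiv.swap 0 2 * Equiv.swap 2 4 * Equiv.swap 4 3 * Equiv.swap 3 1),
  (⟨!![1, 4; 1, 0], by decide⟩, Equiv.swap 0 3 * Equiv.swap 3 4),
  (⟨!![1, 4; 2, 4], by decide⟩, Equiv.swap 1 4 * Equiv.swap 2 3),
  (⟨!![1, 4; 3, 3], by decide⟩, Equiv.swap 0 1 * Equiv.swap 1 2),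
  (⟨!![1, 4; 4, 2], by decide⟩, Equiv.swap 0 4 * Equiv.swap 4 2 * Equiv.swap 2 1 * Equiv.swap 1 3),
  (⟨!![2, 0; 0, 3], by decide⟩, Equiv.swap 0 2 * Equiv.swap 1 4),
  (⟨!![2, 0; 1, 3], by decide⟩, Equiv.swap 0 1 * Equiv.swap 3 4),
  (⟨!![2, 0; 2, 3], by decide⟩, Equiv.swap 0 3 * Equiv.swap 1 2),
  (⟨!![2, 0; 3, 3], by decide⟩, Equiv.swap 0 4 * Equiv.swap 2 3),
  (⟨!![2, 0; 4, 3], by decide⟩, Equiv.swap 1 3 * Equiv.swap 2 4)]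

def a5t5 : List (SL5 × Equiv.Perm (Fin 5)) := [
  (⟨!![2, 1; 0, 3], by decide⟩, Equiv.swap 0 1 * Equiv.swap 2 3),
  (⟨!![2, 1; 1, 1], by decide⟩, Equiv.swap 0 3 * Equiv.swap 3 1 * Equiv.swap 1 2 * Equiv.swap 2 4),
  (⟨!![2, 1; 2, 4], by decide⟩, Equiv.swap 0 4 * Equiv.swap 4 2),
  (⟨!![2, 1; 3, 2], by decide⟩, Equiv.swap 1 3 * Equiv.swap 3 4),
  (⟨!![2, 1; 4, 0], by decide⟩, Equiv.swap 0 2 * Equiv.swap 2 1 * Equiv.swap 1 4 * Equiv.swap 4 3),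
  (⟨!![2, 2; 0, 3], by decide⟩, Equiv.swap 0 4 * Equiv.swap 1 3),
  (⟨!![2, 2; 1, 4], by decide⟩, Equiv.swap 1 4 * Equiv.swap 4 2),
  (⟨!![2, 2; 2, 0], by decide⟩, Equiv.swap 0 2 * Equiv.swap 2 3 * Equiv.swap 3 4 * Equiv.swap 4 1),
  (⟨!![2, 2; 3, 1], by decide⟩, Equiv.swap 0 1 * Equiv.swap 1 2 * Equiv.swap 2 4 * Equiv.swap 4 3),
  (⟨!![2, 2; 4, 2], by decide⟩, Equiv.swap 0 3 * Equiv.swap 3 2)]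

def a5t6 : List (SL5 × Equiv.Perm (Fin 5)) := [
  (⟨!![2, 3; 0, 3], by decide⟩, Equiv.swap 1 2 * Equiv.swap 3 4),
  (⟨!![2, 3; 1, 2], by decide⟩, Equiv.swap 0 2 * Equiv.swap 2 3),
  (⟨!![2, 3; 2, 1], by decide⟩, Equiv.swap 0 1 * Equiv.swap 1 3 * Equiv.swap 3 2 * Equiv.swap 2 4),
  (⟨!![2, 3; 3, 0], by decide⟩, Equiv.swap 0 3 * Equiv.swap 3 1 * Equiv.swap 1 4 * Equiv.swap 4 2),
  (⟨!![2, 3; 4, 4], by decide⟩, Equiv.swap 0 4 * Equiv.swap 4 1),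
  (⟨!![2, 4; 0, 3], by decide⟩, Equiv.swap 0 3 * Equiv.swap 2 4),
  (⟨!![2, 4; 1, 0], by decide⟩, Equiv.swap 0 4 * Equiv.swap 4 1 * Equiv.swap 1 3 * Equiv.swap 3 2),
  (⟨!![2, 4; 2, 2], by decide⟩, Equiv.swap 1 4 * Equiv.swap 4 3),
  (⟨!![2, 4; 3, 4], by decide⟩, Equiv.swap 0 2 * Equiv.swap 2 1),
  (⟨!![2, 4; 4, 1], by decide⟩, Equiv.swap 0 1 * Equiv.swap 1 2 * Equiv.swap 2 3 * Equiv.swap 3 4)]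

def a5t7 : List (SL5 × Equiv.Perm (Fin 5)) := [
  (⟨!![3, 0; 0, 2], by decide⟩, Equiv.swap 0 2 * Equiv.swap 1 4),
  (⟨!![3, 0; 1, 2], by decide⟩, Equiv.swap 1 3 * Equiv.swap 2 4),
  (⟨!![3, 0; 2, 2], by decide⟩, Equiv.swap 0 4 * Equiv.swap 2 3),
  (⟨!![3, 0; 3, 2], by decide⟩, Equiv.swap 0 3 * Equiv.swap 1 2),
  (⟨!![3, 0; 4, 2], by decide⟩, Equiv.swap 0 1 * Equiv.swap 3 4),
  (⟨!![3, 1; 0, 2], by decide⟩, Equiv.swap 0 3 * Equiv.swap 2 4),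
  (⟨!![3, 1; 1, 4], by decide⟩, Equiv.swap 0 1 * Equiv.swap 1 2 * Equiv.swap 2 3 * Equiv.swap 3 4),
  (⟨!![3, 1; 2, 1], by decide⟩, Equiv.swap 0 2 * Equiv.swap 2 1),
  (⟨!![3, 1; 3, 3], by decide⟩, Equiv.swap 1 4 * Equiv.swap 4 3),
  (⟨!![3, 1; 4, 0], by decide⟩, Equiv.swap 0 4 * Equiv.swap 4 1 * Equiv.swap 1 3 * Equiv.swap 3 2)]

def a5t8 : List (SL5 × Equiv.Perm (Fin 5)) := [
  (⟨!![3, 2; 0, 2], by decide⟩, Equiv.swap 1 2 * Equiv.swap 3 4),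
  (⟨!![3, 2; 1, 1], by decide⟩, Equiv.swap 0 4 * Equiv.swap 4 1),
  (⟨!![3, 2; 2, 0], by decide⟩, Equiv.swap 0 3 * Equiv.swap 3 1 * Equiv.swap 1 4 * Equiv.swap 4 2),
  (⟨!![3, 2; 3, 4], by decide⟩, Equiv.swap 0 1 * Equiv.swap 1 3 * Equiv.swap 3 2 * Equiv.swap 2 4),
  (⟨!![3, 2; 4, 3], by decide⟩, Equiv.swap 0 2 * Equiv.swap 2 3),
  (⟨!![3, 3; 0, 2], by decide⟩, Equiv.swap 0 4 * Equiv.swap 1 3),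
  (⟨!![3, 3; 1, 3], by decide⟩, Equiv.swap 0 3 * Equiv.swap 3 2),
  (⟨!![3, 3; 2, 4], by decide⟩, Equiv.swap 0 1 * Equiv.swap 1 2 * Equiv.swap 2 4 * Equiv.swap 4 3),
  (⟨!![3, 3; 3, 0], by decide⟩, Equiv.swap 0 2 * Equiv.swap 2 3 * Equiv.swap 3 4 * Equiv.swap 4 1),
  (⟨!![3, 3; 4, 1], by decide⟩, Equiv.swap 1 4 * Equiv.swap 4 2)]

def a5t9 : List (SL5 × Equiv.Perm (Fin 5)) := [
  (⟨!![3, 4; 0, 2], by decide⟩, Equiv.swap 0 1 * Equiv.swap 2 3),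
  (⟨!![3, 4; 1, 0], by decide⟩, Equiv.swap 0 2 * Equiv.swap 2 1 * Equiv.swap 1 4 * Equiv.swap 4 3),
  (⟨!![3, 4; 2, 3], by decide⟩, Equiv.swap 1 3 * Equiv.swap 3 4),
  (⟨!![3, 4; 3, 1], by decide⟩, Equiv.swap 0 4 * Equiv.swap 4 2),
  (⟨!![3, 4; 4, 4], by decide⟩, Equiv.swap 0 3 * Equiv.swap 3 1 * Equiv.swap 1 2 * Equiv.swap 2 4),
  (⟨!![4, 0; 0, 4], by decide⟩, 1),
  (⟨!![4, 0; 1, 4], by decide⟩, Equiv.swap 0 3 * Equiv.swap 3 2 * Equiv.swap 2 4 * Equiv.swap 4 1),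
  (⟨!![4, 0; 2, 4], by decide⟩, Equiv.swap 0 2 * Equiv.swap 2 1 * Equiv.swap 1 3 * Equiv.swap 3 4),
  (⟨!![4, 0; 3, 4], by decide⟩, Equiv.swap 0 4 * Equiv.swap 4 3 * Equiv.swap 3 1 * Equiv.swap 1 2),
  (⟨!![4, 0; 4, 4], by decide⟩, Equiv.swap 0 1 * Equiv.swap 1 4 * Equiv.swap 4 2 * Equiv.swap 2 3)]

def a5t10 : List (SL5 × Equiv.Perm (Fin 5)) := [
  (⟨!![4, 1; 0, 4], by decide⟩, Equiv.swap 0 2 * Equiv.swap 2 4 * Equiv.swap 4 3 * Equiv.swap 3 1),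
  (⟨!![4, 1; 1, 3], by decide⟩, Equiv.swap 0 4 * Equiv.swap 4 2 * Equiv.swap 2 1 * Equiv.swap 1 3),
  (⟨!![4, 1; 2, 2], by decide⟩, Equiv.swap 0 1 * Equiv.swap 1 2),
  (⟨!![4, 1; 3, 1], by decide⟩, Equiv.swap 1 4 * Equiv.swap 2 3),
  (⟨!![4, 1; 4, 0], by decide⟩, Equiv.swap 0 3 * Equiv.swap 3 4),
  (⟨!![4, 2; 0, 4], by decide⟩, Equiv.swap 0 4 * Equiv.swap 4 1 * Equiv.swap 1 2 * Equiv.swap 2 3),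
  (⟨!![4, 2; 1, 2], by decide⟩, Equiv.swap 0 1 * Equiv.swap 1 4),
  (⟨!![4, 2; 2, 0], by decide⟩, Equiv.swap 2 4 * Equiv.swap 4 3),
  (⟨!![4, 2; 3, 3], by decide⟩, Equiv.swap 0 3 * Equiv.swap 3 4 * Equiv.swap 4 2 * Equiv.swap 2 1),
  (⟨!![4, 2; 4, 1], by decide⟩, Equiv.swap 0 2 * Equiv.swap 1 3)]

def a5t11 : List (SL5 × Equiv.Perm (Fin 5)) := [
  (⟨!![4, 3; 0, 4], by decide⟩, Equiv.swap 0 3 * Equiv.swap 3 2 * Equiv.swap 2 1 * Equiv.swap 1 4),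
  (⟨!![4, 3; 1, 1], by decide⟩, Equiv.swap 0 2 * Equiv.swap 3 4),
  (⟨!![4, 3; 2, 3], by decide⟩, Equiv.swap 0 4 * Equiv.swap 4 2 * Equiv.swap 2 3 * Equiv.swap 3 1),
  (⟨!![4, 3; 3, 0], by decide⟩, Equiv.swap 0 1 * Equiv.swap 1 3),
  (⟨!![4, 3; 4, 2], by decide⟩, Equiv.swap 1 2 * Equiv.swap 2 4),
  (⟨!![4, 4; 0, 4], by decide⟩, Equiv.swap 0 1 * Equiv.swap 1 3 * Equiv.swap 3 4 * Equiv.swap 4 2),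
  (⟨!![4, 4; 1, 0], by decide⟩, Equiv.swap 1 2 * Equiv.swap 2 3),
  (⟨!![4, 4; 2, 1], by decide⟩, Equiv.swap 0 3 * Equiv.swap 1 4),
  (⟨!![4, 4; 3, 2], by decide⟩, Equiv.swap 0 2 * Equiv.swap 2 4),
  (⟨!![4, 4; 4, 3], by decide⟩, Equiv.swap 0 4 * Equiv.swap 4 3 * Equiv.swap 3 2 * Equiv.swap 2 1)]

def a5tbl : List (SL5 × Equiv.Perm (Fin 5)) := a5t0 ++ a5t1 ++ a5t2 ++ a5t3 ++ a5t4 ++ a5t5 ++ a5t6 ++ a5t7 ++ a5t8 ++ a5t9 ++ a5t10 ++ a5t11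

set_option maxHeartbeats 8000000 in
set_option maxRecDepth 100000 in
def a5code : Nat → Nat → Nat → Nat → Equiv.Perm (Fin 5)
  | 0, 1, 4, 0 => Equiv.swap 0 1 * Equiv.swap 2 4
  | 0, 1, 4, 1 => Equiv.swap 0 4 * Equiv.swap 4 3
  | 0, 1, 4, 2 => Equiv.swap 0 2 * Equiv.swap 2 3 * Equiv.swap 3 1 * Equiv.swap 1 4
  | 0, 1, 4, 3 => Equiv.swap 0 3 * Equiv.swap 3 4 * Equiv.swap 4 1 * Equiv.swap 1 2
  | 0, 1, 4, 4 => Equiv.swap 1 3 * Equiv.swap 3 2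
  | 0, 2, 2, 0 => Equiv.swap 0 4 * Equiv.swap 1 2
  | 0, 2, 2, 1 => Equiv.swap 2 3 * Equiv.swap 3 4
  | 0, 2, 2, 2 => Equiv.swap 0 2 * Equiv.swap 2 4 * Equiv.swap 4 1 * Equiv.swap 1 3
  | 0, 2, 2, 3 => Equiv.swap 0 1 * Equiv.swap 1 4 * Equiv.swap 4 3 * Equiv.swap 3 2
  | 0, 2, 2, 4 => Equiv.swap 0 3 * Equiv.swap 3 1
  | 0, 3, 3, 0 => Equiv.swap 0 4 * Equiv.swap 1 2
  | 0, 3, 3, 1 => Equiv.swap 0 3 * Equiv.swap 3 1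
  | 0, 3, 3, 2 => Equiv.swap 0 1 * Equiv.swap 1 4 * Equiv.swap 4 3 * Equiv.swap 3 2
  | 0, 3, 3, 3 => Equiv.swap 0 2 * Equiv.swap 2 4 * Equiv.swap 4 1 * Equiv.swap 1 3
  | 0, 3, 3, 4 => Equiv.swap 2 3 * Equiv.swap 3 4
  | 0, 4, 1, 0 => Equiv.swap 0 1 * Equiv.swap 2 4
  | 0, 4, 1, 1 => Equiv.swap 1 3 * Equiv.swap 3 2
  | 0, 4, 1, 2 => Equiv.swap 0 3 * Equiv.swap 3 4 * Equiv.swap 4 1 * Equiv.swap 1 2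
  | 0, 4, 1, 3 => Equiv.swap 0 2 * Equiv.swap 2 3 * Equiv.swap 3 1 * Equiv.swap 1 4
  | 0, 4, 1, 4 => Equiv.swap 0 4 * Equiv.swap 4 3
  | 1, 0, 0, 1 => 1
  | 1, 0, 1, 1 => Equiv.swap 0 1 * Equiv.swap 1 4 * Equiv.swap 4 2 * Equiv.swap 2 3
  | 1, 0, 2, 1 => Equiv.swap 0 4 * Equiv.swap 4 3 * Equiv.swap 3 1 * Equiv.swap 1 2
  | 1, 0, 3, 1 => Equiv.swap 0 2 * Equiv.swap 2 1 * Equiv.swap 1 3 * Equiv.swap 3 4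
  | 1, 0, 4, 1 => Equiv.swap 0 3 * Equiv.swap 3 2 * Equiv.swap 2 4 * Equiv.swap 4 1
  | 1, 1, 0, 1 => Equiv.swap 0 1 * Equiv.swap 1 3 * Equiv.swap 3 4 * Equiv.swap 4 2
  | 1, 1, 1, 2 => Equiv.swap 0 4 * Equiv.swap 4 3 * Equiv.swap 3 2 * Equiv.swap 2 1
  | 1, 1, 2, 3 => Equiv.swap 0 2 * Equiv.swap 2 4
  | 1, 1, 3, 4 => Equiv.swap 0 3 * Equiv.swap 1 4
  | 1, 1, 4, 0 => Equiv.swap 1 2 * Equiv.swap 2 3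
  | 1, 2, 0, 1 => Equiv.swap 0 3 * Equiv.swap 3 2 * Equiv.swap 2 1 * Equiv.swap 1 4
  | 1, 2, 1, 3 => Equiv.swap 1 2 * Equiv.swap 2 4
  | 1, 2, 2, 0 => Equiv.swap 0 1 * Equiv.swap 1 3
  | 1, 2, 3, 2 => Equiv.swap 0 4 * Equiv.swap 4 2 * Equiv.swap 2 3 * Equiv.swap 3 1
  | 1, 2, 4, 4 => Equiv.swap 0 2 * Equiv.swap 3 4
  | 1, 3, 0, 1 => Equiv.swap 0 4 * Equiv.swap 4 1 * Equiv.swap 1 2 * Equiv.swap 2 3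
  | 1, 3, 1, 4 => Equiv.swap 0 2 * Equiv.swap 1 3
  | 1, 3, 2, 2 => Equiv.swap 0 3 * Equiv.swap 3 4 * Equiv.swap 4 2 * Equiv.swap 2 1
  | 1, 3, 3, 0 => Equiv.swap 2 4 * Equiv.swap 4 3
  | 1, 3, 4, 3 => Equiv.swap 0 1 * Equiv.swap 1 4
  | 1, 4, 0, 1 => Equiv.swap 0 2 * Equiv.swap 2 4 * Equiv.swap 4 3 * Equiv.swap 3 1
  | 1, 4, 1, 0 => Equiv.swap 0 3 * Equiv.swap 3 4
  | 1, 4, 2, 4 => Equiv.swap 1 4 * Equiv.swap 2 3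
  | 1, 4, 3, 3 => Equiv.swap 0 1 * Equiv.swap 1 2
  | 1, 4, 4, 2 => Equiv.swap 0 4 * Equiv.swap 4 2 * Equiv.swap 2 1 * Equiv.swap 1 3
  | 2, 0, 0, 3 => Equiv.swap 0 2 * Equiv.swap 1 4
  | 2, 0, 1, 3 => Equiv.swap 0 1 * Equiv.swap 3 4
  | 2, 0, 2, 3 => Equiv.swap 0 3 * Equiv.swap 1 2
  | 2, 0, 3, 3 => Equiv.swap 0 4 * Equiv.swap 2 3
  | 2, 0, 4, 3 => Equiv.swap 1 3 * Equiv.swap 2 4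
  | 2, 1, 0, 3 => Equiv.swap 0 1 * Equiv.swap 2 3
  | 2, 1, 1, 1 => Equiv.swap 0 3 * Equiv.swap 3 1 * Equiv.swap 1 2 * Equiv.swap 2 4
  | 2, 1, 2, 4 => Equiv.swap 0 4 * Equiv.swap 4 2
  | 2, 1, 3, 2 => Equiv.swap 1 3 * Equiv.swap 3 4
  | 2, 1, 4, 0 => Equiv.swap 0 2 * Equiv.swap 2 1 * Equiv.swap 1 4 * Equiv.swap 4 3
  | 2, 2, 0, 3 => Equiv.swap 0 4 * Equiv.swap 1 3
  | 2, 2, 1, 4 => Equiv.swap 1 4 * Equiv.swap 4 2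
  | 2, 2, 2, 0 => Equiv.swap 0 2 * Equiv.swap 2 3 * Equiv.swap 3 4 * Equiv.swap 4 1
  | 2, 2, 3, 1 => Equiv.swap 0 1 * Equiv.swap 1 2 * Equiv.swap 2 4 * Equiv.swap 4 3
  | 2, 2, 4, 2 => Equiv.swap 0 3 * Equiv.swap 3 2
  | 2, 3, 0, 3 => Equiv.swap 1 2 * Equiv.swap 3 4
  | 2, 3, 1, 2 => Equiv.swap 0 2 * Equiv.swap 2 3
  | 2, 3, 2, 1 => Equiv.swap 0 1 * Equiv.swap 1 3 * Equiv.swap 3 2 * Equiv.swap 2 4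
  | 2, 3, 3, 0 => Equiv.swap 0 3 * Equiv.swap 3 1 * Equiv.swap 1 4 * Equiv.swap 4 2
  | 2, 3, 4, 4 => Equiv.swap 0 4 * Equiv.swap 4 1
  | 2, 4, 0, 3 => Equiv.swap 0 3 * Equiv.swap 2 4
  | 2, 4, 1, 0 => Equiv.swap 0 4 * Equiv.swap 4 1 * Equiv.swap 1 3 * Equiv.swap 3 2
  | 2, 4, 2, 2 => Equiv.swap 1 4 * Equiv.swap 4 3
  | 2, 4, 3, 4 => Equiv.swap 0 2 * Equiv.swap 2 1
  | 2, 4, 4, 1 => Equiv.swap 0 1 * Equiv.swap 1 2 * Equiv.swap 2 3 * Equiv.swap 3 4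
  | 3, 0, 0, 2 => Equiv.swap 0 2 * Equiv.swap 1 4
  | 3, 0, 1, 2 => Equiv.swap 1 3 * Equiv.swap 2 4
  | 3, 0, 2, 2 => Equiv.swap 0 4 * Equiv.swap 2 3
  | 3, 0, 3, 2 => Equiv.swap 0 3 * Equiv.swap 1 2
  | 3, 0, 4, 2 => Equiv.swap 0 1 * Equiv.swap 3 4
  | 3, 1, 0, 2 => Equiv.swap 0 3 * Equiv.swap 2 4
  | 3, 1, 1, 4 => Equiv.swap 0 1 * Equiv.swap 1 2 * Equiv.swap 2 3 * Equiv.swap 3 4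
  | 3, 1, 2, 1 => Equiv.swap 0 2 * Equiv.swap 2 1
  | 3, 1, 3, 3 => Equiv.swap 1 4 * Equiv.swap 4 3
  | 3, 1, 4, 0 => Equiv.swap 0 4 * Equiv.swap 4 1 * Equiv.swap 1 3 * Equiv.swap 3 2
  | 3, 2, 0, 2 => Equiv.swap 1 2 * Equiv.swap 3 4
  | 3, 2, 1, 1 => Equiv.swap 0 4 * Equiv.swap 4 1
  | 3, 2, 2, 0 => Equiv.swap 0 3 * Equiv.swap 3 1 * Equiv.swap 1 4 * Equiv.swap 4 2
  | 3, 2, 3, 4 => Equiv.swap 0 1 * Equiv.swap 1 3 * Equiv.swap 3 2 * Equiv.swap 2 4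
  | 3, 2, 4, 3 => Equiv.swap 0 2 * Equiv.swap 2 3
  | 3, 3, 0, 2 => Equiv.swap 0 4 * Equiv.swap 1 3
  | 3, 3, 1, 3 => Equiv.swap 0 3 * Equiv.swap 3 2
  | 3, 3, 2, 4 => Equiv.swap 0 1 * Equiv.swap 1 2 * Equiv.swap 2 4 * Equiv.swap 4 3
  | 3, 3, 3, 0 => Equiv.swap 0 2 * Equiv.swap 2 3 * Equiv.swap 3 4 * Equiv.swap 4 1
  | 3, 3, 4, 1 => Equiv.swap 1 4 * Equiv.swap 4 2
  | 3, 4, 0, 2 => Equiv.swap 0 1 * Equiv.swap 2 3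
  | 3, 4, 1, 0 => Equiv.swap 0 2 * Equiv.swap 2 1 * Equiv.swap 1 4 * Equiv.swap 4 3
  | 3, 4, 2, 3 => Equiv.swap 1 3 * Equiv.swap 3 4
  | 3, 4, 3, 1 => Equiv.swap 0 4 * Equiv.swap 4 2
  | 3, 4, 4, 4 => Equiv.swap 0 3 * Equiv.swap 3 1 * Equiv.swap 1 2 * Equiv.swap 2 4
  | 4, 0, 0, 4 => 1
  | 4, 0, 1, 4 => Equiv.swap 0 3 * Equiv.swap 3 2 * Equiv.swap 2 4 * Equiv.swap 4 1
  | 4, 0, 2, 4 => Equiv.swap 0 2 * Equiv.swap 2 1 * Equiv.swap 1 3 * Equiv.swap 3 4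
  | 4, 0, 3, 4 => Equiv.swap 0 4 * Equiv.swap 4 3 * Equiv.swap 3 1 * Equiv.swap 1 2
  | 4, 0, 4, 4 => Equiv.swap 0 1 * Equiv.swap 1 4 * Equiv.swap 4 2 * Equiv.swap 2 3
  | 4, 1, 0, 4 => Equiv.swap 0 2 * Equiv.swap 2 4 * Equiv.swap 4 3 * Equiv.swap 3 1
  | 4, 1, 1, 3 => Equiv.swap 0 4 * Equiv.swap 4 2 * Equiv.swap 2 1 * Equiv.swap 1 3
  | 4, 1, 2, 2 => Equiv.swap 0 1 * Equiv.swap 1 2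
  | 4, 1, 3, 1 => Equiv.swap 1 4 * Equiv.swap 2 3
  | 4, 1, 4, 0 => Equiv.swap 0 3 * Equiv.swap 3 4
  | 4, 2, 0, 4 => Equiv.swap 0 4 * Equiv.swap 4 1 * Equiv.swap 1 2 * Equiv.swap 2 3
  | 4, 2, 1, 2 => Equiv.swap 0 1 * Equiv.swap 1 4
  | 4, 2, 2, 0 => Equiv.swap 2 4 * Equiv.swap 4 3
  | 4, 2, 3, 3 => Equiv.swap 0 3 * Equiv.swap 3 4 * Equiv.swap 4 2 * Equiv.swap 2 1
  | 4, 2, 4, 1 => Equiv.swap 0 2 * Equiv.swap 1 3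
  | 4, 3, 0, 4 => Equiv.swap 0 3 * Equiv.swap 3 2 * Equiv.swap 2 1 * Equiv.swap 1 4
  | 4, 3, 1, 1 => Equiv.swap 0 2 * Equiv.swap 3 4
  | 4, 3, 2, 3 => Equiv.swap 0 4 * Equiv.swap 4 2 * Equiv.swap 2 3 * Equiv.swap 3 1
  | 4, 3, 3, 0 => Equiv.swap 0 1 * Equiv.swap 1 3
  | 4, 3, 4, 2 => Equiv.swap 1 2 * Equiv.swap 2 4
  | 4, 4, 0, 4 => Equiv.swap 0 1 * Equiv.swap 1 3 * Equiv.swap 3 4 * Equiv.swap 4 2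
  | 4, 4, 1, 0 => Equiv.swap 1 2 * Equiv.swap 2 3
  | 4, 4, 2, 1 => Equiv.swap 0 3 * Equiv.swap 1 4
  | 4, 4, 3, 2 => Equiv.swap 0 2 * Equiv.swap 2 4
  | 4, 4, 4, 3 => Equiv.swap 0 4 * Equiv.swap 4 3 * Equiv.swap 3 2 * Equiv.swap 2 1
  | _, _, _, _ => 1

def a5f (M : SL5) : Equiv.Perm (Fin 5) :=
  a5code (M.1 0 0).val (M.1 0 1).val (M.1 1 0).val (M.1 1 1).val

def a5elsN (n : Nat) : SL5 := (a5tbl.getD n (1, 1)).1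

abbrev a5P (i j : Nat) : Prop :=
  a5f (a5elsN i * a5elsN j) = a5f (a5elsN i) * a5f (a5elsN j)

theorem a5one : a5f 1 = 1 := by decide

set_option maxRecDepth 1000000 in
set_option maxHeartbeats 100000000 in
theorem a5surjN : ∀ a : SL5, ∃ i < 120, a5elsN i = a := by decide

set_option maxRecDepth 1000000 in
set_option maxHeartbeats 100000000 in
theorem a5hom_c0 : ∀ i < 12, 0 ≤ i → ∀ j < 120, a5P i j := by decide

set_option maxRecDepth 1000000 in
set_option maxHeartbeats 100000000 in
theorem a5hom_c1 : ∀ i < 24, 12 ≤ i → ∀ j < 120, a5P i j := by decide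

set_option maxRecDepth 1000000 in
set_option maxHeartbeats 100000000 in
theorem a5hom_c2 : ∀ i < 36, 24 ≤ i → ∀ j < 120, a5P i j := by decide

set_option maxRecDepth 1000000 in
set_option maxHeartbeats 100000000 in
theorem a5hom_c3 : ∀ i < 48, 36 ≤ i → ∀ j < 120, a5P i j := by decide

set_option maxRecDepth 1000000 in
set_option maxHeartbeats 100000000 in
theorem a5hom_c4 : ∀ i < 60, 48 ≤ i → ∀ j < 120, a5P i j := by decide

set_option maxRecDepth 1000000 in
set_option maxHeartbeats 100000000 in
theorem a5hom_c5 : ∀ i < 72, 60 ≤ i → ∀ j < 120, a5P i j := by decide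

set_option maxRecDepth 1000000 in
set_option maxHeartbeats 100000000 in
theorem a5hom_c6 : ∀ i < 84, 72 ≤ i → ∀ j < 120, a5P i j := by decide

set_option maxRecDepth 1000000 in
set_option maxHeartbeats 100000000 in
theorem a5hom_c7 : ∀ i < 96, 84 ≤ i → ∀ j < 120, a5P i j := by decide

set_option maxRecDepth 1000000 in
set_option maxHeartbeats 100000000 in
theorem a5hom_c8 : ∀ i < 108, 96 ≤ i → ∀ j < 120, a5P i j := by decide

set_option maxRecDepth 1000000 in
set_option maxHeartbeats 100000000 in
theorem a5hom_c9 : ∀ i < 120, 108 ≤ i → ∀ j < 120, a5P i j := by decide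

theorem a5homAll : ∀ i < 120, ∀ j < 120, a5P i j := by
  intro i hi j hj
  by_cases h0 : i < 12
  · exact a5hom_c0 i h0 (by omega) j hj
  by_cases h1 : i < 24
  · exact a5hom_c1 i h1 (by omega) j hj
  by_cases h2 : i < 36
  · exact a5hom_c2 i h2 (by omega) j hj
  by_cases h3 : i < 48
  · exact a5hom_c3 i h3 (by omega) j hj
  by_cases h4 : i < 60
  · exact a5hom_c4 i h4 (by omega) j hj
  by_cases h5 : i < 72
  · exact a5hom_c5 i h5 (by omega) j hj
  by_cases h6 : i < 84
  · exact a5hom_c6 i h6 (by omega) j hj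
  by_cases h7 : i < 96
  · exact a5hom_c7 i h7 (by omega) j hj
  by_cases h8 : i < 108
  · exact a5hom_c8 i h8 (by omega) j hj
  exact a5hom_c9 i (by omega) (by omega) j hj

set_option maxRecDepth 1000000 in
set_option maxHeartbeats 100000000 in
theorem a5kerN : ∀ i < 120,
    (a5f (a5elsN i) = 1 ↔ ∀ j < 120, a5elsN j * a5elsN i = a5elsN i * a5elsN j) := by decide

set_option maxRecDepth 1000000 in
set_option maxHeartbeats 100000000 in
theorem a5even : ∀ i < 120, a5f (a5elsN i) ∈ alternatingGroup (Fin 5) := by decide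

set_option maxRecDepth 1000000 in
set_option maxHeartbeats 100000000 in
theorem a5onto : ∀ x : Equiv.Perm (Fin 5),
    x ∈ alternatingGroup (Fin 5) → ∃ i < 120, a5f (a5elsN i) = x := by decide

def a5F : SL5 →* Equiv.Perm (Fin 5) where
  toFun := a5f
  map_one' := a5one
  map_mul' a b := by
    obtain ⟨i, hi, rfl⟩ := a5surjN a
    obtain ⟨j, hj, rfl⟩ := a5surjN b
    exact a5homAll i hi j hj

theorem a5ker : a5F.ker = Subgroup.center SL5 := by
  ext a
  obtain ⟨i, hi, rfl⟩ := a5surjN a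
  rw [MonoidHom.mem_ker, Subgroup.mem_center_iff]
  constructor
  · intro h g
    obtain ⟨j, hj, rfl⟩ := a5surjN g
    exact (a5kerN i hi).mp h j hj
  · intro h
    exact (a5kerN i hi).mpr fun j _ => h (a5elsN j)

theorem a5range : a5F.range = alternatingGroup (Fin 5) := by
  ext x
  constructor
  · rintro ⟨a, rfl⟩
    obtain ⟨i, hi, rfl⟩ := a5surjN a
    exact a5even i hi
  · intro hx
    obtain ⟨i, _, hfi⟩ := a5onto x hx
    exact ⟨a5elsN i, hfi⟩

/-- The alternating group `A₅` is isomorphic to `PSL(2,5)`,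
the quotient of `SL(2, ZMod 5)` by its center. -/
theorem a5_iso_psl25 :
    Nonempty (alternatingGroup (Fin 5) ≃*
      (Matrix.SpecialLinearGroup (Fin 2) (ZMod 5) ⧸
        Subgroup.center (Matrix.SpecialLinearGroup (Fin 2) (ZMod 5)))) := by
  exact ⟨(((QuotientGroup.quotientMulEquivOfEq a5ker.symm).trans
    (QuotientGroup.quotientKerEquivRange a5F)).trans (MulEquiv.subgroupCongr a5range)).symm⟩
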